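/- arXiv:1206.6006 — 4 statements merged into one kernel-verified Lean document; each statement's English description precedes it below -/
import Mathlib

section
/- (Bound B) Let q be a prime power and let k, d, r, n be integers with d ≥ 2, k ≥ 1, 0 ≤ r ≤ min{⌊(d−1)/2⌋, k}, and suppose there exists an (n,k,q) systematic code C whose minimum distance is at least d. Then |B(r,k)| ≤ A_q(n−k, d−2r) − |B(r,n−k)|/|B(d−2r−1,n−k)| + 1, an inequality of rational numbers. -/
/-- `|B(l,m)| = ∑_{j=0}^{l} C(m,j)(q−1)^j`, the number of vectors of `F_q^m`
of Hamming weight at most `l`. -/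
def ballCard (q l m : ℕ) : ℕ := ∑ j ∈ Finset.range (l + 1), m.choose j * (q - 1) ^ j

/-- `A_q(n,d)`: the maximum cardinality of a (nonempty) code `C ⊆ F^n` in which any two
distinct words are at Hamming distance at least `d`. -/
noncomputable def maxCodeCard (F : Type) [Fintype F] [DecidableEq F] (n d : ℕ) : ℕ :=
  sSup {M | ∃ C : Finset (Fin n → F), C.Nonempty ∧ C.card = M ∧
    ∀ c ∈ C, ∀ c' ∈ C, c ≠ c' → d ≤ hammingDist c c'}

/-- `C` is an `(n,k,q)` systematic code: the image of an injective map
`φ : F^k → F^n` which is the identity on the first `k` coordinates. -/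
def IsSystematicCode {F : Type} [Fintype F] [DecidableEq F] {n : ℕ} (k : ℕ)
    (C : Finset (Fin n → F)) : Prop :=
  ∃ φ : (Fin k → F) → (Fin n → F), Function.Injective φ ∧
    (∀ v : Fin k → F, ∀ i : Fin n, ∀ h : (i : ℕ) < k, φ v i = v ⟨i, h⟩) ∧
    C = Finset.image φ Finset.univ

open Finset

section aux

lemma ballCard_pos (q l m : ℕ) : 0 < ballCard q l m := by
  have h1 := Finset.single_le_sum (f := fun j => m.choose j * (q - 1) ^ j)
    (fun j _ => Nat.zero_le _) (Finset.mem_range.mpr (Nat.succ_pos l))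
  simp only [Nat.choose_zero_right, pow_zero, mul_one, one_mul] at h1
  exact lt_of_lt_of_le Nat.zero_lt_one h1

variable {F : Type} [Fintype F] [DecidableEq F]

lemma card_support_piece [Zero F] (m : ℕ) (s : Finset (Fin m)) :
    (univ.filter fun x : Fin m → F => ∀ i, x i ≠ 0 ↔ i ∈ s).card
      = (Fintype.card F - 1) ^ s.card := by
  classical
  rw [← Fintype.card_subtype]
  have e : {x : Fin m → F // ∀ i, x i ≠ 0 ↔ i ∈ s} ≃ (∀ _ : s, {a : F // a ≠ 0}) :=
    { toFun := fun x i => ⟨x.1 i.1, (x.2 i.1).mpr i.2⟩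
      invFun := fun g => ⟨fun i => if h : i ∈ s then (g ⟨i, h⟩).1 else 0, by
        intro i
        constructor
        · intro hne
          by_contra hmem
          simp [hmem] at hne
        · intro hmem
          simp only [dif_pos hmem]
          exact (g ⟨i, hmem⟩).2⟩
      left_inv := by
        intro x
        ext i
        by_cases h : i ∈ s
        · simp [h]
        · simp only [dif_neg h]
          by_contra hne
          exact h ((x.2 i).mp (Ne.symm hne))
      right_inv := by
        intro g
        ext i
        simp [i.2] }
  rw [Fintype.card_congr e, Fintype.card_pi]
  have h1 : ∀ a : F, Fintype.card {b : F // b ≠ a} = Fintype.card F - 1 := by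
    intro a
    rw [Fintype.card_subtype_compl, Fintype.card_subtype_eq]
  simp [h1, prod_const]

lemma card_wt_eq [Zero F] (m j : ℕ) :
    (univ.filter fun x : Fin m → F => hammingNorm x = j).card
      = m.choose j * (Fintype.card F - 1) ^ j := by
  classical
  have hdisj : ∀ s ∈ Finset.powersetCard j (univ : Finset (Fin m)),
      ∀ t ∈ Finset.powersetCard j (univ : Finset (Fin m)), s ≠ t →
      Disjoint (univ.filter fun x : Fin m → F => ∀ i, x i ≠ 0 ↔ i ∈ s)
        (univ.filter fun x : Fin m → F => ∀ i, x i ≠ 0 ↔ i ∈ t) := by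
    intro s _ t _ hst
    rw [Finset.disjoint_left]
    intro x hx hx'
    simp only [mem_filter, mem_univ, true_and] at hx hx'
    exact hst (by ext i; rw [← hx i, hx' i])
  have hsplit : (univ.filter fun x : Fin m → F => hammingNorm x = j)
      = (Finset.powersetCard j (univ : Finset (Fin m))).biUnion
          (fun s => univ.filter fun x : Fin m → F => ∀ i, x i ≠ 0 ↔ i ∈ s) := by
    ext x
    simp only [mem_filter, mem_univ, true_and, mem_biUnion, Finset.mem_powersetCard]
    constructor
    · intro h
      exact ⟨univ.filter fun i => x i ≠ 0, ⟨filter_subset _ _, h⟩, fun i => by simp⟩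
    · rintro ⟨s, ⟨-, hcard⟩, hs⟩
      have hfe : (univ.filter fun i => x i ≠ 0) = s := by
        ext i; simp [hs i]
      rw [show hammingNorm x = (univ.filter fun i => x i ≠ 0).card from rfl, hfe]
      exact hcard
  rw [hsplit, card_biUnion hdisj]
  rw [Finset.sum_congr rfl (fun s hs => by
    rw [card_support_piece, (Finset.mem_powersetCard.mp hs).2])]
  rw [sum_const, Finset.card_powersetCard, Finset.card_univ, Fintype.card_fin, smul_eq_mul]

lemma card_wt_le [Zero F] (m l : ℕ) :
    (univ.filter fun x : Fin m → F => hammingNorm x ≤ l).card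
      = ballCard (Fintype.card F) l m := by
  classical
  have hsplit : (univ.filter fun x : Fin m → F => hammingNorm x ≤ l)
      = (Finset.range (l + 1)).biUnion
          (fun j => univ.filter fun x : Fin m → F => hammingNorm x = j) := by
    ext x
    simp only [mem_filter, mem_univ, true_and, mem_biUnion, Finset.mem_range]
    exact ⟨fun h => ⟨hammingNorm x, by omega, rfl⟩, fun ⟨j, hj, he⟩ => by omega⟩
  rw [hsplit, card_biUnion]
  · exact Finset.sum_congr rfl fun j _ => card_wt_eq m j
  · intro a _ b _ hab
    rw [Function.onFun, Finset.disjoint_left]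
    intro x hx hx'
    simp only [mem_filter, mem_univ, true_and] at hx hx'
    exact hab (hx ▸ hx')

lemma card_ball [AddGroup F] (m l : ℕ) (c : Fin m → F) :
    (univ.filter fun x : Fin m → F => hammingDist x c ≤ l).card
      = ballCard (Fintype.card F) l m := by
  classical
  rw [← card_wt_le m l]
  apply Finset.card_bij' (fun x _ => x - c) (fun y _ => y + c)
  · intro x hx
    simp only [mem_filter, mem_univ, true_and] at hx ⊢
    rwa [show hammingNorm (x - c) = hammingDist x c by simp [hammingDist, hammingNorm, sub_eq_zero]]
  · intro y hy
    simp only [mem_filter, mem_univ, true_and] at hy ⊢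
    rwa [show hammingDist (y + c) c = hammingNorm y by simp [hammingDist, hammingNorm]]
  · intro x _; simp
  · intro y _; simp

end aux

/-- the "tail" of a word: its last `n - k` coordinates. -/
def tl {F : Type} (n k : ℕ) (c : Fin n → F) : Fin (n - k) → F :=
  fun j => c ⟨k + j.1, by have := j.isLt; omega⟩

lemma dist_split {F : Type} [DecidableEq F] (n k : ℕ) (hk : 0 < k)
    (c c' : Fin n → F) (v w : Fin k → F)
    (hc : ∀ i : Fin n, ∀ h : (i : ℕ) < k, c i = v ⟨i, h⟩)
    (hc' : ∀ i : Fin n, ∀ h : (i : ℕ) < k, c' i = w ⟨i, h⟩) :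
    hammingDist c c' ≤ hammingDist v w + hammingDist (tl n k c) (tl n k c') := by
  classical
  have hsub : (univ.filter fun i : Fin n => c i ≠ c' i)
      ⊆ (univ.filter fun i : Fin n => c i ≠ c' i ∧ (i : ℕ) < k)
        ∪ (univ.filter fun i : Fin n => c i ≠ c' i ∧ k ≤ (i : ℕ)) := by
    intro i
    simp only [mem_filter, mem_univ, true_and, mem_union]
    exact fun h => (Nat.lt_or_ge (i : ℕ) k).imp (fun h' => ⟨h, h'⟩) (fun h' => ⟨h, h'⟩)
  have hd1 : (univ.filter fun i : Fin n => c i ≠ c' i ∧ (i : ℕ) < k).card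
      ≤ hammingDist v w := by
    apply Finset.card_le_card_of_injOn
      (fun i : Fin n => if h : (i : ℕ) < k then (⟨(i : ℕ), h⟩ : Fin k) else ⟨0, hk⟩)
    · intro i hi
      simp only [coe_filter, Set.mem_setOf_eq, mem_filter, mem_univ, true_and] at hi
      simp only [dif_pos hi.2, hammingDist, coe_filter, Set.mem_setOf_eq, mem_filter, mem_univ, true_and]
      rw [← hc i hi.2, ← hc' i hi.2]
      exact hi.1
    · intro a ha b hb hab
      simp only [coe_filter, Set.mem_setOf_eq] at ha hb
      simp only [dif_pos ha.2.2, dif_pos hb.2.2, Fin.mk.injEq] at hab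
      exact Fin.ext hab
  have hd2 : (univ.filter fun i : Fin n => c i ≠ c' i ∧ k ≤ (i : ℕ)).card
      ≤ hammingDist (tl n k c) (tl n k c') := by
    rcases Nat.lt_or_ge k n with hkn | hkn
    · apply Finset.card_le_card_of_injOn
        (fun i : Fin n => if h : (i : ℕ) - k < n - k then (⟨(i : ℕ) - k, h⟩ : Fin (n - k))
          else ⟨0, by omega⟩)
      · intro i hi
        simp only [coe_filter, Set.mem_setOf_eq, mem_filter, mem_univ, true_and] at hi
        have hlt : (i : ℕ) - k < n - k := by have := i.isLt; omega
        simp only [dif_pos hlt, hammingDist, Finset.mem_coe, mem_filter, mem_univ, true_and]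
        simp only [tl]
        have heq : (⟨k + ((i : ℕ) - k), by omega⟩ : Fin n) = i := Fin.ext (by
          simp only []; omega)
        rw [heq]
        exact hi.1
      · intro a ha b hb hab
        simp only [coe_filter, Set.mem_setOf_eq] at ha hb
        have hla : (a : ℕ) - k < n - k := by have := a.isLt; omega
        have hlb : (b : ℕ) - k < n - k := by have := b.isLt; omega
        simp only [dif_pos hla, dif_pos hlb, Fin.mk.injEq] at hab
        have h2a := ha.2.2
        have h2b := hb.2.2
        exact Fin.ext (by omega)
    · have hempty : (univ.filter fun i : Fin n => c i ≠ c' i ∧ k ≤ (i : ℕ)) = ∅ := by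
        apply Finset.filter_eq_empty_iff.mpr
        intro i _
        have := i.isLt
        omega
      rw [hempty]
      simp
  calc hammingDist c c' = (univ.filter fun i : Fin n => c i ≠ c' i).card := rfl
    _ ≤ _ := Finset.card_le_card hsub
    _ ≤ _ := Finset.card_union_le _ _
    _ ≤ hammingDist v w + hammingDist (tl n k c) (tl n k c') := Nat.add_le_add hd1 hd2

/-- Bound ℬ. -/
theorem boundB (q n k d r : ℕ) (hq : IsPrimePow q)
    (F : Type) [Field F] [Fintype F] [DecidableEq F] (hF : Fintype.card F = q)
    (hd : 2 ≤ d) (hk : 1 ≤ k) (hr : r ≤ min ((d - 1) / 2) k)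
    (C : Finset (Fin n → F)) (hsys : IsSystematicCode k C)
    (hCdist : ∀ c ∈ C, ∀ c' ∈ C, c ≠ c' → d ≤ hammingDist c c') :
    (ballCard q r k : ℚ) ≤ (maxCodeCard F (n - k) (d - 2 * r) : ℚ)
      - (ballCard q r (n - k) : ℚ) / (ballCard q (d - 2 * r - 1) (n - k) : ℚ) + 1 := by
  classical
  obtain ⟨φ, hφinj, hφid, hCeq⟩ := hsys
  have hrd : 2 * r + 1 ≤ d := by
    have h1 : r ≤ (d - 1) / 2 := le_trans hr (min_le_left _ _)
    omega
  set m := n - k with hm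
  set e := d - 2 * r with he
  have he1 : 1 ≤ e := by omega
  -- basic facts about the code
  have hdistC : ∀ v w : Fin k → F, v ≠ w → d ≤ hammingDist (φ v) (φ w) := by
    intro v w hvw
    refine hCdist _ ?_ _ ?_ (fun h => hvw (hφinj h)) <;>
      (rw [hCeq]; exact Finset.mem_image_of_mem _ (Finset.mem_univ _))
  have hsplit : ∀ v w : Fin k → F,
      hammingDist (φ v) (φ w) ≤ hammingDist v w + hammingDist (tl n k (φ v)) (tl n k (φ w)) :=
    fun v w => dist_split n k hk (φ v) (φ w) v w (hφid v) (hφid w)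
  set Bk : Finset (Fin k → F) := univ.filter fun v => hammingNorm v ≤ r with hBk
  set T : Finset (Fin m → F) := Bk.image fun v => tl n k (φ v) with hT
  have hwt : ∀ v ∈ Bk, hammingNorm v ≤ r := by
    intro v hv; exact (Finset.mem_filter.mp hv).2
  have hdvw : ∀ v ∈ Bk, ∀ w ∈ Bk, hammingDist v w ≤ 2 * r := by
    intro v hv w hw
    calc hammingDist v w ≤ hammingDist v 0 + hammingDist 0 w := hammingDist_triangle _ _ _
      _ ≤ 2 * r := by
        rw [hammingDist_zero_right, hammingDist_comm, hammingDist_zero_right]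
        have := hwt v hv; have := hwt w hw; omega
  have hTdist : ∀ v ∈ Bk, ∀ w ∈ Bk, v ≠ w →
      e ≤ hammingDist (tl n k (φ v)) (tl n k (φ w)) := by
    intro v hv w hw hvw
    have h1 := hdistC v w hvw
    have h2 := hsplit v w
    have h3 := hdvw v hv w hw
    omega
  have hTinj : Set.InjOn (fun v => tl n k (φ v)) Bk := by
    intro v hv w hw heq
    by_contra hne
    have heq' : tl n k (φ v) = tl n k (φ w) := heq
    have h1 := hTdist v hv w hw hne
    rw [heq', hammingDist_self] at h1
    omega
  have hTcard : T.card = ballCard q r k := by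
    rw [hT, Finset.card_image_of_injOn hTinj, hBk, card_wt_le, hF]
  -- the center
  set c0 : Fin m → F := tl n k (φ 0) with hc0
  have h0Bk : (0 : Fin k → F) ∈ Bk := by
    rw [hBk]; simp [hammingNorm_zero]
  have hc0T : c0 ∈ T := by
    rw [hT]; exact Finset.mem_image_of_mem _ h0Bk
  have hfar : ∀ v ∈ Bk, v ≠ 0 → d - r ≤ hammingDist (tl n k (φ v)) c0 := by
    intro v hv hvne
    have h1 := hdistC v 0 hvne
    have h2 := hsplit v 0
    rw [← hc0] at h2
    have h3 : hammingDist v 0 ≤ r := by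
      rw [hammingDist_zero_right]; exact hwt v hv
    omega
  -- the ball around c0 and a maximal packing inside it
  set B0 : Finset (Fin m → F) := univ.filter fun x => hammingDist x c0 ≤ r with hB0
  have hc0B0 : c0 ∈ B0 := by rw [hB0]; simp
  set Fam : Finset (Finset (Fin m → F)) := B0.powerset.filter
    (fun D => c0 ∈ D ∧ ∀ x ∈ D, ∀ y ∈ D, x ≠ y → e ≤ hammingDist x y) with hFam
  have hFamne : Fam.Nonempty := by
    refine ⟨{c0}, ?_⟩
    rw [hFam, Finset.mem_filter]
    refine ⟨Finset.mem_powerset.mpr (Finset.singleton_subset_iff.mpr hc0B0),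
      Finset.mem_singleton_self _, ?_⟩
    intro x hx y hy hxy
    rw [Finset.mem_singleton] at hx hy
    exact absurd (hx.trans hy.symm) hxy
  obtain ⟨D, hDFam, hDmax⟩ := Finset.exists_max_image Fam Finset.card hFamne
  rw [hFam, Finset.mem_filter, Finset.mem_powerset] at hDFam
  obtain ⟨hDsub, hDc0, hDpair⟩ := hDFam
  have hcover : ∀ x ∈ B0, ∃ y ∈ D, hammingDist x y ≤ e - 1 := by
    intro x hx
    by_contra hcon
    push_neg at hcon
    have hxD : x ∉ D := by
      intro h
      have := hcon x h
      rw [hammingDist_self] at this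
      omega
    have hins : insert x D ∈ Fam := by
      rw [hFam, Finset.mem_filter, Finset.mem_powerset]
      refine ⟨Finset.insert_subset hx hDsub, Finset.mem_insert_of_mem hDc0, ?_⟩
      intro a ha b hb hab
      rcases Finset.mem_insert.mp ha with rfl | ha' <;>
        rcases Finset.mem_insert.mp hb with rfl | hb'
      · exact absurd rfl hab
      · have := hcon b hb'; omega
      · have := hcon a ha'; rw [hammingDist_comm]; omega
      · exact hDpair a ha' b hb' hab
    have := hDmax _ hins
    rw [Finset.card_insert_of_notMem hxD] at this
    omega
  have hB0card : B0.card ≤ D.card * ballCard q (e - 1) m := by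
    have hsub2 : B0 ⊆ D.biUnion fun y => univ.filter fun x => hammingDist x y ≤ e - 1 := by
      intro x hx
      rw [Finset.mem_biUnion]
      obtain ⟨y, hy, hxy⟩ := hcover x hx
      exact ⟨y, hy, by simp [hxy]⟩
    calc B0.card ≤ _ := Finset.card_le_card hsub2
      _ ≤ ∑ y ∈ D, (univ.filter fun x => hammingDist x y ≤ e - 1).card :=
        Finset.card_biUnion_le
      _ = ∑ y ∈ D, ballCard q (e - 1) m := by
        refine Finset.sum_congr rfl fun y _ => ?_
        rw [card_ball, hF]
      _ = D.card * ballCard q (e - 1) m := by rw [Finset.sum_const, smul_eq_mul]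
  have hB0c : B0.card = ballCard q r m := by rw [hB0, card_ball, hF]
  -- the extended code
  set E : Finset (Fin m → F) := (T.erase c0) ∪ D with hE
  have hdisjTD : Disjoint (T.erase c0) D := by
    rw [Finset.disjoint_left]
    intro t ht htD
    obtain ⟨htne, htT⟩ := Finset.mem_erase.mp ht
    rw [hT] at htT
    obtain ⟨v, hv, rfl⟩ := Finset.mem_image.mp htT
    have hvne : v ≠ 0 := by rintro rfl; exact htne rfl
    have h1 := hfar v hv hvne
    have h2 : hammingDist (tl n k (φ v)) c0 ≤ r := (Finset.mem_filter.mp (hDsub htD)).2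
    omega
  have hEdist : ∀ x ∈ E, ∀ y ∈ E, x ≠ y → e ≤ hammingDist x y := by
    have hTD : ∀ t ∈ T.erase c0, ∀ y ∈ D, e ≤ hammingDist t y := by
      intro t ht y hy
      obtain ⟨htne, htT⟩ := Finset.mem_erase.mp ht
      rw [hT] at htT
      obtain ⟨v, hv, rfl⟩ := Finset.mem_image.mp htT
      have hvne : v ≠ 0 := by rintro rfl; exact htne rfl
      have h1 := hfar v hv hvne
      have h2 : hammingDist y c0 ≤ r := (Finset.mem_filter.mp (hDsub hy)).2
      have h3 := hammingDist_triangle (tl n k (φ v)) y c0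
      have h4 : hammingDist y c0 = hammingDist c0 y := hammingDist_comm _ _
      omega
    intro x hx y hy hxy
    rcases Finset.mem_union.mp hx with hx' | hx' <;>
      rcases Finset.mem_union.mp hy with hy' | hy'
    · obtain ⟨hxne, hxT⟩ := Finset.mem_erase.mp hx'
      obtain ⟨hyne, hyT⟩ := Finset.mem_erase.mp hy'
      rw [hT] at hxT hyT
      obtain ⟨v, hv, rfl⟩ := Finset.mem_image.mp hxT
      obtain ⟨w, hw, rfl⟩ := Finset.mem_image.mp hyT
      exact hTdist v hv w hw (fun h => hxy (by rw [h]))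
    · exact hTD x hx' y hy'
    · rw [hammingDist_comm]; exact hTD y hy' x hx'
    · exact hDpair x hx' y hy' hxy
  have hEcard : E.card = T.card - 1 + D.card := by
    rw [hE, Finset.card_union_of_disjoint hdisjTD, Finset.card_erase_of_mem hc0T]
  have hT1 : 1 ≤ T.card := Finset.card_pos.mpr ⟨c0, hc0T⟩
  have hEne : E.Nonempty := ⟨c0, Finset.mem_union_right _ hDc0⟩
  have hMbound : E.card ≤ maxCodeCard F m e := by
    apply le_csSup
    · refine ⟨Fintype.card (Fin m → F), ?_⟩
      rintro M ⟨C', _, rfl, _⟩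
      exact Finset.card_le_univ C'
    · exact ⟨E, hEne, rfl, hEdist⟩
  -- put everything together over ℚ
  have hkey : T.card + D.card ≤ maxCodeCard F m e + 1 := by omega
  have hB'pos : 0 < ballCard q (e - 1) m := ballCard_pos _ _ _
  have hB'posQ : (0 : ℚ) < (ballCard q (e - 1) m : ℚ) := by exact_mod_cast hB'pos
  have h2 : (ballCard q r m : ℚ) ≤ (D.card : ℚ) * (ballCard q (e - 1) m : ℚ) := by
    have := hB0c ▸ hB0card
    exact_mod_cast this
  have h3 : (ballCard q r m : ℚ) / (ballCard q (e - 1) m : ℚ) ≤ (D.card : ℚ) :=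
    (div_le_iff₀ hB'posQ).mpr h2
  have h4 : (T.card : ℚ) + (D.card : ℚ) ≤ (maxCodeCard F m e : ℚ) + 1 := by
    exact_mod_cast hkey
  rw [← hTcard]
  linarith
end

section
/- Let q be a prime power and let n > k ≥ 1 be integers. If there exists an (n,k,q) systematic code whose minimum distance is at least d ≥ 2, and r is an integer with 0 ≤ r ≤ min{⌊(d−1)/2⌋, k}, then |B(r,k)| ≤ A_q(n−k, d−2r). -/
open Finset

section Counting

variable {F : Type} [Fintype F] [DecidableEq F] [Zero F]

lemma supp_count (q : ℕ) (hF : Fintype.card F = q) {k : ℕ} (s : Finset (Fin k)) :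
    (univ.filter (fun v : Fin k → F => univ.filter (fun i => v i ≠ 0) = s)).card
      = (q - 1) ^ s.card := by
  rw [← Fintype.card_subtype]
  have e : {v : Fin k → F // univ.filter (fun i => v i ≠ 0) = s} ≃
      (s → {x : F // x ≠ 0}) :=
    { toFun := fun v i => ⟨v.1 i.1, by
        have hi : (i : Fin k) ∈ univ.filter (fun j => v.1 j ≠ 0) := by rw [v.2]; exact i.2
        exact (mem_filter.mp hi).2⟩
      invFun := fun f => ⟨fun i => if h : i ∈ s then (f ⟨i, h⟩).1 else 0, by
        ext i
        simp only [mem_filter, mem_univ, true_and]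
        constructor
        · intro h
          by_contra hi
          simp [hi] at h
        · intro h
          simp only [dif_pos h]
          exact (f ⟨i, h⟩).2⟩
      left_inv := fun v => by
        apply Subtype.ext
        funext i
        by_cases h : i ∈ s
        · simp [h]
        · simp only [dif_neg h]
          have : i ∉ univ.filter (fun j => v.1 j ≠ 0) := by rw [v.2]; exact h
          simp only [mem_filter, mem_univ, true_and, not_not] at this
          exact this.symm
      right_inv := fun f => by
        funext i
        apply Subtype.ext
        simp [i.2] }
  rw [Fintype.card_congr e, Fintype.card_fun, Fintype.card_coe]
  congr 1
  have : Fintype.card {x : F // x ≠ 0} = q - 1 := by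
    rw [Fintype.card_subtype_compl, Fintype.card_subtype_eq, hF]
  rw [this]

lemma count_exact (q : ℕ) (hF : Fintype.card F = q) (k j : ℕ) :
    (univ.filter (fun v : Fin k → F => hammingNorm v = j)).card
      = k.choose j * (q - 1) ^ j := by
  have hdef : ∀ v : Fin k → F, hammingNorm v = (univ.filter (fun i => v i ≠ 0)).card := by
    intro v; rfl
  have hsplit : univ.filter (fun v : Fin k → F => hammingNorm v = j)
      = (univ.powersetCard j).biUnion
          (fun s => univ.filter (fun v => univ.filter (fun i => v i ≠ 0) = s)) := by
    ext v
    simp only [mem_filter, mem_univ, true_and, mem_biUnion, mem_powersetCard, hdef]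
    constructor
    · intro h
      exact ⟨_, ⟨subset_univ _, h⟩, rfl⟩
    · rintro ⟨s, ⟨-, hcard⟩, hsupp⟩
      rw [hsupp, hcard]
  rw [hsplit, card_biUnion]
  · rw [Finset.sum_congr rfl (fun s hs => by
      rw [supp_count q hF s, (mem_powersetCard.mp hs).2]),
      Finset.sum_const, card_powersetCard, card_univ, Fintype.card_fin, smul_eq_mul]
  · intro s hs t ht hst
    simp only [disjoint_left, mem_filter, mem_univ, true_and]
    rintro v rfl h
    exact hst h

lemma count_ball (q : ℕ) (hF : Fintype.card F = q) (k r : ℕ) :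
    (univ.filter (fun v : Fin k → F => hammingNorm v ≤ r)).card = ballCard q r k := by
  have hsplit : univ.filter (fun v : Fin k → F => hammingNorm v ≤ r)
      = (Finset.range (r + 1)).biUnion
          (fun j => univ.filter (fun v : Fin k → F => hammingNorm v = j)) := by
    ext v
    simp only [mem_filter, mem_univ, true_and, mem_biUnion, mem_range]
    constructor
    · intro h; exact ⟨_, by omega, rfl⟩
    · rintro ⟨a, ha, rfl⟩; omega
  rw [hsplit, card_biUnion]
  · unfold ballCard
    exact Finset.sum_congr rfl (fun j _ => count_exact q hF k j)
  · intro a ha b hb hab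
    simp only [disjoint_left, mem_filter, mem_univ, true_and]
    rintro v rfl h
    exact hab h

end Counting

/-- The Litsyn–Laihonen bound in the systematic case. -/
theorem litsyn_laihonen_systematic (q n k d r : ℕ) (hq : IsPrimePow q)
    (F : Type) [Field F] [Fintype F] [DecidableEq F] (hF : Fintype.card F = q)
    (hk : 1 ≤ k) (hkn : k < n) (hd : 2 ≤ d) (hr : r ≤ min ((d - 1) / 2) k)
    (C : Finset (Fin n → F)) (hsys : IsSystematicCode k C)
    (hCdist : ∀ c ∈ C, ∀ c' ∈ C, c ≠ c' → d ≤ hammingDist c c') :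
    ballCard q r k ≤ maxCodeCard F (n - k) (d - 2 * r) := by
  classical
  obtain ⟨φ, hinj, hid, hC⟩ := hsys
  have hnk : 0 < n - k := by omega
  have h2r : 2 * r + 1 ≤ d := by
    have h1 := le_min_iff.mp hr
    omega
  set ψ : (Fin k → F) → (Fin (n - k) → F) :=
    fun v i => φ v ⟨k + i.1, by omega⟩ with hψ
  -- distance splitting
  have hsplitdist : ∀ v v' : Fin k → F,
      hammingDist (φ v) (φ v') ≤ hammingDist v v' + hammingDist (ψ v) (ψ v') := by
    intro v v'
    have hS : hammingDist (φ v) (φ v')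
        = (univ.filter (fun i : Fin n => φ v i ≠ φ v' i)).card := rfl
    set S := univ.filter (fun i : Fin n => φ v i ≠ φ v' i) with hSdef
    rw [hS, ← card_filter_add_card_filter_not (s := S)
      (p := fun i => (i : ℕ) < k)]
    apply Nat.add_le_add
    · have : hammingDist v v' = (univ.filter (fun i : Fin k => v i ≠ v' i)).card := rfl
      rw [this]
      refine Finset.card_le_card_of_injOn
        (fun i : Fin n => if h : (i : ℕ) < k then (⟨i, h⟩ : Fin k) else ⟨0, hk⟩) ?_ ?_
      · intro i hi
        obtain ⟨hiS, hlt⟩ := mem_filter.mp hi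
        obtain ⟨-, hne⟩ := mem_filter.mp hiS
        simp only [dif_pos hlt, mem_coe, mem_filter, mem_univ, true_and]
        rw [← hid v i hlt, ← hid v' i hlt]
        exact hne
      · intro a ha b hb hab
        have hla := (mem_filter.mp ha).2
        have hlb := (mem_filter.mp hb).2
        simp only [dif_pos hla, dif_pos hlb] at hab
        have h2 := congrArg Fin.val hab
        simp only [Fin.val_mk] at h2
        exact Fin.ext h2
    · have : hammingDist (ψ v) (ψ v')
          = (univ.filter (fun i : Fin (n - k) => ψ v i ≠ ψ v' i)).card := rfl
      rw [this]
      refine Finset.card_le_card_of_injOn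
        (fun i : Fin n => if h : k ≤ (i : ℕ) then (⟨(i : ℕ) - k, by omega⟩ : Fin (n - k))
          else ⟨0, hnk⟩) ?_ ?_
      · intro i hi
        obtain ⟨hiS, hge⟩ := mem_filter.mp hi
        obtain ⟨-, hne⟩ := mem_filter.mp hiS
        have hge' : k ≤ (i : ℕ) := by omega
        simp only [dif_pos hge', mem_coe, mem_filter, mem_univ, true_and, hψ]
        have hieq : (⟨k + ((i : ℕ) - k), by omega⟩ : Fin n) = i :=
          Fin.ext (show k + ((i : ℕ) - k) = (i : ℕ) by omega)
        simpa [hieq] using hne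
      · intro a ha b hb hab
        have hla : k ≤ (a : ℕ) := by have := (mem_filter.mp ha).2; omega
        have hlb : k ≤ (b : ℕ) := by have := (mem_filter.mp hb).2; omega
        simp only [dif_pos hla, dif_pos hlb] at hab
        have h2 := congrArg Fin.val hab
        simp only [Fin.val_mk] at h2
        exact Fin.ext (by omega)
  set B : Finset (Fin k → F) := univ.filter (fun v => hammingNorm v ≤ r) with hB
  set D : Finset (Fin (n - k) → F) := B.image ψ with hD
  have hmemC : ∀ v : Fin k → F, φ v ∈ C := by
    intro v; rw [hC]; exact mem_image_of_mem _ (mem_univ _)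
  have hdistB : ∀ v ∈ B, ∀ v' ∈ B, v ≠ v' →
      d - 2 * r ≤ hammingDist (ψ v) (ψ v') := by
    intro v hv v' hv' hvv'
    have hφ : φ v ≠ φ v' := fun h => hvv' (hinj h)
    have h1 : d ≤ hammingDist (φ v) (φ v') := hCdist _ (hmemC v) _ (hmemC v') hφ
    have h2 : hammingDist v v' ≤ 2 * r := by
      have ht := hammingDist_triangle v (0 : Fin k → F) v'
      rw [hammingDist_zero_right, hammingDist_comm 0 v', hammingDist_zero_right] at ht
      have hnv := (mem_filter.mp hv).2
      have hnv' := (mem_filter.mp hv').2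
      omega
    have h3 := hsplitdist v v'
    omega
  have hinjOn : Set.InjOn ψ B := by
    intro v hv v' hv' hψeq
    by_contra hvv'
    have := hdistB v hv v' hv' hvv'
    rw [hψeq, hammingDist_self] at this
    omega
  have hcardD : D.card = ballCard q r k := by
    rw [hD, card_image_of_injOn hinjOn, hB, count_ball q hF k r]
  have hDdist : ∀ c ∈ D, ∀ c' ∈ D, c ≠ c' → d - 2 * r ≤ hammingDist c c' := by
    intro c hc c' hc' hcc'
    obtain ⟨v, hv, rfl⟩ := mem_image.mp hc
    obtain ⟨v', hv', rfl⟩ := mem_image.mp hc'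
    exact hdistB v hv v' hv' (fun h => hcc' (by rw [h]))
  have hDne : D.Nonempty := by
    refine ⟨ψ 0, mem_image_of_mem _ ?_⟩
    simp [hB, hammingNorm_zero]
  rw [← hcardD]
  apply le_csSup
  · refine ⟨Fintype.card (Fin (n - k) → F), ?_⟩
    rintro M ⟨C', -, rfl, -⟩
    exact Finset.card_le_univ C'
  · exact ⟨D, hDne, rfl, hDdist⟩
end

section
/- Let q be a prime power, n ≥ d ≥ 1 and r ≥ d−1 be integers. Let D̄ ⊆ F_q^n be a code in which any two distinct words are at Hamming distance at least d, and suppose D̄ is maximal for this property, i.e. there is no vector y ∈ F_q^n \ D̄ with d(y,c) ≥ d for all c ∈ D̄. Then |D̄ ∩ B(r,n)| ≥ |B(r−d+1, n)| / |B(d−1, n)| (an inequality of rational numbers, equivalently |D̄ ∩ B(r,n)|·|B(d−1,n)| ≥ |B(r−d+1,n)|). -/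
lemma card_support_eq (n : ℕ) (F : Type) [Field F] [Fintype F] [DecidableEq F]
    (s : Finset (Fin n)) :
    (Finset.univ.filter fun x : Fin n → F =>
        (Finset.univ.filter fun i => x i ≠ 0) = s).card
      = (Fintype.card F - 1) ^ s.card := by
  classical
  have hset : (Finset.univ.filter fun x : Fin n → F =>
      (Finset.univ.filter fun i => x i ≠ 0) = s)
      = Fintype.piFinset (fun i => if i ∈ s then Finset.univ.erase 0 else {0}) := by
    ext x
    simp only [Finset.mem_filter, Finset.mem_univ, true_and, Fintype.mem_piFinset]
    constructor
    · intro h i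
      by_cases hi : i ∈ s
      · simp only [hi, if_true, Finset.mem_erase, Finset.mem_univ, and_true]
        rw [← h] at hi
        simpa using hi
      · simp only [hi, if_false, Finset.mem_singleton]
        by_contra hx
        exact hi (h ▸ (by simpa using hx : i ∈ Finset.univ.filter fun i => x i ≠ 0))
    · intro h
      ext i
      simp only [Finset.mem_filter, Finset.mem_univ, true_and]
      have := h i
      by_cases hi : i ∈ s
      · simp only [hi, if_true, Finset.mem_erase] at this
        simp [hi, this.1]
      · simp only [hi, if_false, Finset.mem_singleton] at this
        simp [hi, this]
  rw [hset, Fintype.card_piFinset]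
  have : ∀ i : Fin n, ((if i ∈ s then Finset.univ.erase (0 : F) else {0}).card)
      = if i ∈ s then Fintype.card F - 1 else 1 := by
    intro i
    by_cases hi : i ∈ s <;> simp [hi, Finset.card_erase_of_mem, Finset.card_univ]
  simp only [this]
  rw [Finset.prod_ite_mem, Finset.univ_inter, Finset.prod_const]

lemma card_ball_eq (n l : ℕ) (F : Type) [Field F] [Fintype F] [DecidableEq F] :
    (Finset.univ.filter fun x : Fin n → F => hammingNorm x ≤ l).card
      = ballCard (Fintype.card F) l n := by
  classical
  rw [Finset.card_eq_sum_card_fiberwise (f := hammingNorm)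
      (t := Finset.range (l + 1))
      (fun x hx => Finset.mem_range.mpr (Nat.lt_succ_of_le (Finset.mem_filter.mp hx).2))]
  unfold ballCard
  refine Finset.sum_congr rfl fun j hj => ?_
  have hj' : j ≤ l := Nat.lt_succ_iff.mp (Finset.mem_range.mp hj)
  have h1 : ((Finset.univ.filter fun x : Fin n → F => hammingNorm x ≤ l).filter
      fun x => hammingNorm x = j)
      = Finset.univ.filter fun x : Fin n → F => hammingNorm x = j := by
    ext x
    simp only [Finset.mem_filter, Finset.mem_univ, true_and]
    constructor
    · exact fun h => h.2
    · exact fun h => ⟨h ▸ hj', h⟩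
  rw [h1]
  simp only [hammingNorm]
  rw [Finset.card_eq_sum_card_fiberwise
      (f := fun x : Fin n → F => Finset.univ.filter fun i => x i ≠ 0)
      (t := Finset.powersetCard j Finset.univ)
      (fun x hx => Finset.mem_powersetCard_univ.mpr (Finset.mem_filter.mp hx).2)]
  have h2 : ∀ s ∈ Finset.powersetCard j (Finset.univ : Finset (Fin n)),
      ((Finset.univ.filter fun x : Fin n → F => (Finset.univ.filter fun i => x i ≠ 0).card = j).filter
        fun x => (Finset.univ.filter fun i => x i ≠ 0) = s).card
      = (Fintype.card F - 1) ^ j := by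
    intro s hs
    have hsc : s.card = j := Finset.mem_powersetCard_univ.mp hs
    have h3 : ((Finset.univ.filter fun x : Fin n → F => (Finset.univ.filter fun i => x i ≠ 0).card = j).filter
        fun x => (Finset.univ.filter fun i => x i ≠ 0) = s)
        = Finset.univ.filter fun x : Fin n → F =>
            (Finset.univ.filter fun i => x i ≠ 0) = s := by
      ext x
      simp only [Finset.mem_filter, Finset.mem_univ, true_and, hammingNorm]
      constructor
      · exact fun h => h.2
      · exact fun h => ⟨by rw [h, hsc], h⟩
    rw [h3, card_support_eq, hsc]
  rw [Finset.sum_congr rfl h2, Finset.sum_const, Finset.card_powersetCard,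
    Finset.card_univ, Fintype.card_fin, smul_eq_mul]

/-- A maximal code `D̄` of minimum distance `≥ d` contains at least
`|B(r−d+1,n)| / |B(d−1,n)|` words of weight at most `r`. -/
theorem card_low_weight_words_of_maximal_code (q n d r : ℕ) (hq : IsPrimePow q)
    (F : Type) [Field F] [Fintype F] [DecidableEq F] (hF : Fintype.card F = q)
    (hd1 : 1 ≤ d) (hdn : d ≤ n) (hr : d - 1 ≤ r)
    (D : Finset (Fin n → F))
    (hdist : ∀ c ∈ D, ∀ c' ∈ D, c ≠ c' → d ≤ hammingDist c c')
    (hmax : ¬ ∃ y : Fin n → F, y ∉ D ∧ ∀ c ∈ D, d ≤ hammingDist y c) :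
    ballCard q (r - (d - 1)) n ≤
      (D.filter (fun x => hammingNorm x ≤ r)).card * ballCard q (d - 1) n := by
  classical
  push_neg at hmax
  have hcov : ∀ x : Fin n → F, ∃ c ∈ D, hammingDist x c ≤ d - 1 := by
    intro x
    by_cases hx : x ∈ D
    · exact ⟨x, hx, by simp⟩
    · obtain ⟨c, hc, hlt⟩ := hmax x hx
      exact ⟨c, hc, Nat.le_pred_of_lt hlt⟩
  choose cw hcwD hcwdist using hcov
  have key : (Finset.univ.filter fun x : Fin n → F =>
        hammingNorm x ≤ r - (d - 1)).card ≤
      ((D.filter fun x => hammingNorm x ≤ r) ×ˢ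
        (Finset.univ.filter fun x : Fin n → F => hammingNorm x ≤ d - 1)).card := by
    apply Finset.card_le_card_of_injOn (fun x => (cw x, x - cw x))
    · intro x hx
      have hxn : hammingNorm x ≤ r - (d - 1) := (Finset.mem_filter.mp hx).2
      refine Finset.mem_product.mpr ⟨Finset.mem_filter.mpr ⟨hcwD x, ?_⟩,
        Finset.mem_filter.mpr ⟨Finset.mem_univ _, ?_⟩⟩
      · have : hammingNorm (cw x) ≤ hammingDist (cw x) x + hammingNorm x := by
          rw [← hammingDist_zero_right (cw x)]
          calc hammingDist (cw x) 0 ≤ hammingDist (cw x) x + hammingDist x 0 :=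
                hammingDist_triangle _ _ _
            _ = hammingDist (cw x) x + hammingNorm x := by rw [hammingDist_zero_right]
        calc hammingNorm (cw x) ≤ hammingDist (cw x) x + hammingNorm x := this
          _ ≤ (d - 1) + (r - (d - 1)) := by
              exact Nat.add_le_add (hammingDist_comm x (cw x) ▸ hcwdist x) hxn
          _ = r := by omega
      · show hammingNorm (x - cw x) ≤ d - 1
        rw [← neg_add_eq_sub, ← hammingDist_eq_hammingNorm, hammingDist_comm]
        exact hcwdist x
    · intro a _ b _ hab
      have h1 : cw a = cw b := congrArg Prod.fst hab
      have h2 : a - cw a = b - cw b := congrArg Prod.snd hab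
      rw [h1] at h2
      exact sub_left_injective h2
  rw [Finset.card_product] at key
  have e1 := card_ball_eq n (r - (d - 1)) F
  have e2 := card_ball_eq n (d - 1) F
  rw [hF] at e1 e2
  rw [← e1, ← e2]
  exact key
end

section
/- Let q be a prime power and let n, k, t, d, r be integers with n ≥ k ≥ t ≥ 1, 0 ≤ r ≤ t and 2r < d ≤ n. Let C ⊆ F_q^n be a code in which any two distinct words are at Hamming distance at least d and which contains an (n,k,q) systematic code. Then there exists a code C̄ ⊆ F_q^{n−t} with the following properties: (i) any two distinct words of C̄ are at Hamming distance at least d − 2r; (ii) |C̄| ≥ |C|·|B(r,t)|/q^t (equivalently q^t·|C̄| ≥ |C|·|B(r,t)|); (iii) the zero vector belongs to C̄; (iv) every nonzero word of C̄ has weight at least d − r. -/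
open Finset

section Helpers

variable {F : Type} [Fintype F] [DecidableEq F]

/-- The support of a vector, as a `Finset`. -/
private def vsupp [Zero F] {t : ℕ} (y : Fin t → F) : Finset (Fin t) :=
  Finset.univ.filter (fun i => y i ≠ 0)

private lemma hammingNorm_eq_vsupp [Zero F] {t : ℕ} (y : Fin t → F) :
    hammingNorm y = (vsupp y).card := rfl

private lemma card_vsupp_fiber [Zero F] {t : ℕ} (s : Finset (Fin t)) :
    (Finset.univ.filter (fun y : Fin t → F => vsupp y = s)).card
      = (Fintype.card F - 1) ^ s.card := by
  have h : (Finset.univ.filter (fun y : Fin t → F => vsupp y = s))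
      = Fintype.piFinset (fun i => if i ∈ s then Finset.univ.erase (0 : F) else {0}) := by
    ext y
    simp only [mem_filter, mem_univ, true_and, Fintype.mem_piFinset]
    rw [Finset.ext_iff]
    apply forall_congr'
    intro i
    by_cases hi : i ∈ s <;> simp [vsupp, hi]
  rw [h, Fintype.card_piFinset]
  have : ∀ i : Fin t, ((if i ∈ s then Finset.univ.erase (0 : F) else {0}).card)
      = if i ∈ s then Fintype.card F - 1 else 1 := by
    intro i
    by_cases hi : i ∈ s <;> simp [hi, Finset.card_erase_of_mem]
  simp_rw [this]
  rw [Finset.prod_ite_mem, Finset.univ_inter, Finset.prod_const]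

private lemma card_norm_fiber [Zero F] (t j : ℕ) :
    (Finset.univ.filter (fun y : Fin t → F => hammingNorm y = j)).card
      = t.choose j * (Fintype.card F - 1) ^ j := by
  rw [Finset.card_eq_sum_card_fiberwise (f := vsupp)
      (t := Finset.powersetCard j Finset.univ) (by
        intro y hy
        rw [Finset.mem_coe, mem_filter] at hy
        rw [Finset.mem_coe, Finset.mem_powersetCard]
        exact ⟨Finset.subset_univ _, by rw [← hammingNorm_eq_vsupp, hy.2]⟩)]
  have hterm : ∀ s ∈ Finset.powersetCard j (Finset.univ : Finset (Fin t)),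
      ((Finset.univ.filter (fun y : Fin t → F => hammingNorm y = j)).filter
        (fun y => vsupp y = s)).card = (Fintype.card F - 1) ^ j := by
    intro s hs
    rw [Finset.mem_powersetCard] at hs
    have : ((Finset.univ.filter (fun y : Fin t → F => hammingNorm y = j)).filter
        (fun y => vsupp y = s)) = Finset.univ.filter (fun y : Fin t → F => vsupp y = s) := by
      ext y
      simp only [mem_filter, mem_univ, true_and]
      constructor
      · rintro ⟨-, h⟩; exact h
      · intro h; exact ⟨by rw [hammingNorm_eq_vsupp, h, hs.2], h⟩
    rw [this, card_vsupp_fiber, hs.2]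
  rw [Finset.sum_congr rfl hterm, Finset.sum_const, Finset.card_powersetCard]
  simp [mul_comm]

private lemma card_norm_ball [Zero F] (t r : ℕ) :
    (Finset.univ.filter (fun y : Fin t → F => hammingNorm y ≤ r)).card
      = ballCard (Fintype.card F) r t := by
  rw [ballCard]
  rw [Finset.card_eq_sum_card_fiberwise (f := hammingNorm) (t := Finset.range (r + 1)) (by
    intro y hy
    rw [Finset.mem_coe, mem_filter] at hy
    rw [Finset.mem_coe, Finset.mem_range]
    omega)]
  refine Finset.sum_congr rfl ?_
  intro j hj
  rw [Finset.mem_range] at hj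
  have : ((Finset.univ.filter (fun y : Fin t → F => hammingNorm y ≤ r)).filter
      (fun y => hammingNorm y = j)) = Finset.univ.filter (fun y : Fin t → F => hammingNorm y = j) := by
    ext y
    simp only [mem_filter, mem_univ, true_and]
    constructor
    · rintro ⟨-, h⟩; exact h
    · intro h; exact ⟨by omega, h⟩
  rw [this, card_norm_fiber]

private lemma hammingDist_sub_right' {ι : Type} [Fintype ι] [AddGroup F] (a b z : ι → F) :
    hammingDist (a - z) (b - z) = hammingDist a b := by
  simp only [hammingDist, Pi.sub_apply, ne_eq, sub_left_inj]

/-- Splitting the Hamming distance across the first `t` coordinates and the rest. -/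
private lemma hammingDist_split {n t : ℕ} (htn : t ≤ n) (c c' : Fin n → F) :
    hammingDist c c'
      = hammingDist (fun i : Fin t => c (Fin.castLE htn i)) (fun i => c' (Fin.castLE htn i))
      + hammingDist (fun i : Fin (n - t) => c ⟨t + i.1, by have := i.isLt; omega⟩)
          (fun i : Fin (n - t) => c' ⟨t + i.1, by have := i.isLt; omega⟩) := by
  classical
  set g : ℕ → ℕ := fun i =>
    if h : i < n then (if c ⟨i, h⟩ ≠ c' ⟨i, h⟩ then 1 else 0) else 0 with hg
  have h1 : hammingDist c c' = ∑ i ∈ Finset.range n, g i := by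
    rw [← Fin.sum_univ_eq_sum_range]
    rw [hammingDist, Finset.card_filter]
    refine Finset.sum_congr rfl ?_
    intro i _
    simp [hg, i.isLt]
  have h2 : hammingDist (fun i : Fin t => c (Fin.castLE htn i)) (fun i => c' (Fin.castLE htn i))
      = ∑ i ∈ Finset.range t, g i := by
    rw [← Fin.sum_univ_eq_sum_range]
    rw [hammingDist, Finset.card_filter]
    refine Finset.sum_congr rfl ?_
    intro i _
    have hi : (i : ℕ) < n := lt_of_lt_of_le i.isLt htn
    simp only [hg, dif_pos hi]
    rfl
  have h3 : hammingDist (fun i : Fin (n - t) => c ⟨t + i.1, by have := i.isLt; omega⟩)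
        (fun i : Fin (n - t) => c' ⟨t + i.1, by have := i.isLt; omega⟩)
      = ∑ i ∈ Finset.Ico t n, g i := by
    rw [Finset.sum_Ico_eq_sum_range, ← Fin.sum_univ_eq_sum_range (fun i => g (t + i))]
    rw [hammingDist, Finset.card_filter]
    refine Finset.sum_congr rfl ?_
    intro i _
    have hi : t + (i : ℕ) < n := by have := i.isLt; omega
    simp only [hg, dif_pos hi]
  rw [h1, h2, h3, Finset.sum_range_add_sum_Ico _ htn]

end Helpers

/-- Existence of the punctured code `C̄ ⊆ F_q^{n−t}` of distance `≥ d − 2r`, size at least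
`|C|·|B(r,t)|/q^t`, containing `0`, and whose nonzero words have weight `≥ d − r`. -/
theorem exists_punctured_code (q n k t d r : ℕ) (hq : IsPrimePow q)
    (F : Type) [Field F] [Fintype F] [DecidableEq F] (hF : Fintype.card F = q)
    (ht1 : 1 ≤ t) (htk : t ≤ k) (hkn : k ≤ n)
    (hrt : r ≤ t) (hrd : 2 * r < d) (hdn : d ≤ n)
    (C : Finset (Fin n → F))
    (hCdist : ∀ c ∈ C, ∀ c' ∈ C, c ≠ c' → d ≤ hammingDist c c')
    (hsys : ∃ D : Finset (Fin n → F), D ⊆ C ∧ IsSystematicCode k D) :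
    ∃ Cb : Finset (Fin (n - t) → F),
      (∀ c ∈ Cb, ∀ c' ∈ Cb, c ≠ c' → d - 2 * r ≤ hammingDist c c') ∧
      C.card * ballCard q r t ≤ q ^ t * Cb.card ∧
      (0 : Fin (n - t) → F) ∈ Cb ∧
      (∀ c ∈ Cb, c ≠ 0 → d - r ≤ hammingNorm c) := by
  classical
  have htn : t ≤ n := le_trans htk hkn
  -- projection to the first `t` coordinates and to the last `n - t` coordinates
  set pr : (Fin n → F) → (Fin t → F) := fun c i => c (Fin.castLE htn i) with hpr
  set pu : (Fin n → F) → (Fin (n - t) → F) :=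
    fun c i => c ⟨t + i.1, by have := i.isLt; omega⟩ with hpu
  have hsplit : ∀ c c' : Fin n → F,
      hammingDist c c' = hammingDist (pr c) (pr c') + hammingDist (pu c) (pu c') :=
    fun c c' => hammingDist_split htn c c'
  -- the subcodes `P x`
  set P : (Fin t → F) → Finset (Fin n → F) :=
    fun x => C.filter (fun c => hammingDist (pr c) x ≤ r) with hP
  -- double counting
  have hball : ∀ a : Fin t → F,
      (Finset.univ.filter (fun x : Fin t → F => hammingDist a x ≤ r)).card
        = ballCard q r t := by
    intro a
    rw [← hF, ← card_norm_ball t r]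
    refine Finset.card_nbij' (fun x => a - x) (fun y => a - y) ?_ ?_ ?_ ?_
    · intro x hx
      rw [Finset.mem_coe, mem_filter] at hx ⊢
      refine ⟨mem_univ _, ?_⟩
      show hammingNorm (a - x) ≤ r
      rw [← neg_add_eq_sub, ← hammingDist_eq_hammingNorm, hammingDist_comm]
      exact hx.2
    · intro y hy
      rw [Finset.mem_coe, mem_filter] at hy ⊢
      refine ⟨mem_univ _, ?_⟩
      show hammingDist a (a - y) ≤ r
      rw [hammingDist_eq_hammingNorm, neg_add_eq_sub, sub_sub_cancel_left]
      simpa [hammingNorm] using hy.2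
    · intro x _; simp
    · intro y _; simp
  have hsum : ∑ x : Fin t → F, (P x).card = C.card * ballCard q r t := by
    have : ∀ x : Fin t → F, (P x).card
        = ∑ c ∈ C, (if hammingDist (pr c) x ≤ r then 1 else 0) := by
      intro x; rw [hP]; rw [Finset.card_filter]
    simp_rw [this]
    rw [Finset.sum_comm]
    have : ∀ c ∈ C, (∑ x : Fin t → F, if hammingDist (pr c) x ≤ r then 1 else 0)
        = ballCard q r t := by
      intro c _
      rw [← Finset.card_filter]
      exact hball (pr c)
    rw [Finset.sum_congr rfl this, Finset.sum_const, smul_eq_mul]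
  -- pigeonhole: some `x` with a large subcode
  have hcardx : Fintype.card (Fin t → F) = q ^ t := by
    rw [Fintype.card_fun, hF, Fintype.card_fin]
  obtain ⟨x, -, hx⟩ : ∃ x ∈ (Finset.univ : Finset (Fin t → F)),
      C.card * ballCard q r t ≤ q ^ t * (P x).card := by
    apply Finset.exists_le_of_sum_le Finset.univ_nonempty
    rw [Finset.sum_const, ← Finset.mul_sum, hsum, smul_eq_mul, Finset.card_univ, hcardx]
  -- the codeword `c₀` whose first `t` coordinates are `x`
  obtain ⟨D, hDC, φ, hφinj, hφid, hDeq⟩ := hsys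
  set v : Fin k → F := fun i => if h : (i : ℕ) < t then x ⟨i, h⟩ else 0 with hv
  set c₀ : Fin n → F := φ v with hc₀
  have hc₀C : c₀ ∈ C := hDC (by rw [hDeq]; exact Finset.mem_image_of_mem φ (mem_univ v))
  have hprc₀ : pr c₀ = x := by
    funext i
    have hik : ((Fin.castLE htn i : Fin n) : ℕ) < k := lt_of_lt_of_le i.isLt htk
    rw [hpr]
    show c₀ (Fin.castLE htn i) = x i
    rw [hc₀, hφid v (Fin.castLE htn i) hik, hv]
    simp only [Fin.coe_castLE, i.isLt, dif_pos]
  have hc₀P : c₀ ∈ P x := by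
    rw [hP, mem_filter]
    exact ⟨hc₀C, by rw [hprc₀]; simp⟩
  -- the punctured code
  set f : (Fin n → F) → (Fin (n - t) → F) := fun c => pu c - pu c₀ with hf
  set Cb : Finset (Fin (n - t) → F) := (P x).image f with hCb
  -- auxiliary facts
  have hdist_f : ∀ c c' : Fin n → F, hammingDist (f c) (f c') = hammingDist (pu c) (pu c') := by
    intro c c'; rw [hf]; exact hammingDist_sub_right' _ _ _
  have hprx : ∀ c ∈ P x, ∀ c' ∈ P x,
      hammingDist (pr c) (pr c') ≤ 2 * r := by
    intro c hc c' hc'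
    rw [hP, mem_filter] at hc hc'
    calc hammingDist (pr c) (pr c') ≤ hammingDist (pr c) x + hammingDist x (pr c') :=
          hammingDist_triangle _ _ _
      _ ≤ r + r := add_le_add hc.2 (by rw [hammingDist_comm]; exact hc'.2)
      _ = 2 * r := by omega
  have hkey : ∀ c ∈ P x, ∀ c' ∈ P x, f c ≠ f c' →
      d - 2 * r ≤ hammingDist (f c) (f c') := by
    intro c hc c' hc' hne
    have hcc' : c ≠ c' := fun h => hne (by rw [h])
    have hcC : c ∈ C := (mem_filter.mp hc).1
    have hc'C : c' ∈ C := (mem_filter.mp hc').1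
    have hd := hCdist c hcC c' hc'C hcc'
    rw [hsplit c c'] at hd
    have := hprx c hc c' hc'
    rw [hdist_f]
    omega
  have hfinj : Set.InjOn f (P x) := by
    intro c hc c' hc' hfe
    by_contra hne
    have hcC : c ∈ C := (mem_filter.mp hc).1
    have hc'C : c' ∈ C := (mem_filter.mp hc').1
    have hd := hCdist c hcC c' hc'C hne
    rw [hsplit c c'] at hd
    have h2r := hprx c hc c' hc'
    have : hammingDist (pu c) (pu c') = 0 := by
      rw [← hdist_f, hfe, hammingDist_self]
    omega
  refine ⟨Cb, ?_, ?_, ?_, ?_⟩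
  · -- distance
    intro cb hcb cb' hcb' hne
    rw [hCb] at hcb hcb'
    obtain ⟨c, hc, rfl⟩ := Finset.mem_image.mp hcb
    obtain ⟨c', hc', rfl⟩ := Finset.mem_image.mp hcb'
    exact hkey c hc c' hc' hne
  · -- cardinality
    have : Cb.card = (P x).card := by
      rw [hCb]; exact Finset.card_image_of_injOn hfinj
    rw [this]
    exact hx
  · -- zero
    rw [hCb]
    refine Finset.mem_image.mpr ⟨c₀, hc₀P, ?_⟩
    rw [hf]; simp
  · -- weight
    intro cb hcb hne
    rw [hCb] at hcb
    obtain ⟨c, hc, rfl⟩ := Finset.mem_image.mp hcb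
    have hcc₀ : c ≠ c₀ := by
      intro h
      apply hne
      rw [hf, h]; simp
    have hcC : c ∈ C := (mem_filter.mp hc).1
    have hd := hCdist c hcC c₀ hc₀C hcc₀
    rw [hsplit c c₀] at hd
    have hpr_le : hammingDist (pr c) (pr c₀) ≤ r := by
      rw [hprc₀]
      exact (mem_filter.mp hc).2
    have hnorm : hammingNorm (f c) = hammingDist (pu c) (pu c₀) := by
      rw [hf]
      show hammingNorm (pu c - pu c₀) = _
      rw [hammingDist_comm, hammingDist_eq_hammingNorm, neg_add_eq_sub]
    rw [hnorm]
    omega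
end
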